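/- Fix a natural number L and a real number u with 0 < u < 2. Then, as the positive integer α tends to infinity, (−1)^{L+⌊uα⌋} · 2α · SixJ(α, L, ⌊uα⌋) converges to P_L(1 − u²/2), where P_L is the L-th Legendre polynomial. (This is the Racah asymptotic formula for the 6j-symbol {α α L; α α J} with J of order uα.) -/

import Mathlib

open Filter


open Finset Polynomial

lemma fact_add_eq (a k : ℕ) :
    Nat.factorial (a + k) = Nat.factorial a * ∏ i ∈ Finset.range k, (a + 1 + i) := by
  induction k with
  | zero => simp
  | succ k ih =>
    rw [← add_assoc, Nat.factorial_succ, prod_range_succ, ih]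
    ring

lemma iteratedDeriv_polyeval (k : ℕ) (p : ℝ[X]) (x : ℝ) :
    iteratedDeriv k (fun t => p.eval t) x = (derivative^[k] p).eval x := by
  induction k generalizing p x with
  | zero => simp
  | succ k ih =>
    rw [iteratedDeriv_succ', Function.iterate_succ_apply]
    rw [show deriv (fun t => p.eval t) = fun t => (derivative p).eval t from
      funext fun t => Polynomial.deriv p]
    exact ih _ x

/-- The Legendre polynomial `P_L` via Rodrigues' formula. -/
noncomputable def legendreP (L : ℕ) (x : ℝ) : ℝ :=
  (1 / ((2 : ℝ) ^ L * (Nat.factorial L : ℝ))) *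
    iteratedDeriv L (fun t : ℝ => (t ^ 2 - 1) ^ L) x

lemma coeff_nat (L k : ℕ) (hk : k ≤ L) :
    L.choose k * L.descFactorial (L - k) * L.descFactorial k
      = L.choose k ^ 2 * L.factorial := by
  rw [Nat.descFactorial_eq_factorial_mul_choose, Nat.descFactorial_eq_factorial_mul_choose,
    Nat.choose_symm hk, sq, ← Nat.choose_mul_factorial_mul_factorial hk]
  ring

lemma legendreP_eq_sum (L : ℕ) (x : ℝ) :
    legendreP L x = ∑ k ∈ Finset.range (L + 1),
      (L.choose k : ℝ) ^ 2 * ((x - 1) / 2) ^ k * ((x + 1) / 2) ^ (L - k) := by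
  have hfun : (fun t : ℝ => (t ^ 2 - 1) ^ L)
      = fun t => (((X - C 1) ^ L * (X - C (-1)) ^ L : ℝ[X])).eval t := by
    funext t; simp [← mul_pow]; ring
  rw [legendreP, hfun, iteratedDeriv_polyeval, Polynomial.iterate_derivative_mul]
  rw [Polynomial.eval_finset_sum]
  rw [Finset.mul_sum]
  refine Finset.sum_congr rfl fun k hk => ?_
  have hkL : k ≤ L := Nat.lt_succ_iff.mp (Finset.mem_range.mp hk)
  rw [Polynomial.iterate_derivative_X_sub_pow, Polynomial.iterate_derivative_X_sub_pow]
  have h1 : L - (L - k) = k := by omega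
  simp only [smul_eval, eval_mul, eval_smul, eval_pow, eval_sub, eval_X, eval_C, h1,
    smul_eq_mul, nsmul_eq_mul, Polynomial.eval_natCast]
  have hc := coeff_nat L k hkL
  have hc' : (L.choose k : ℝ) * L.descFactorial (L - k) * L.descFactorial k
      = (L.choose k : ℝ) ^ 2 * L.factorial := by exact_mod_cast hc
  have hfac : (L.factorial : ℝ) ≠ 0 := Nat.cast_ne_zero.mpr L.factorial_ne_zero
  have h2 : (2 : ℝ) ^ L = 2 ^ k * 2 ^ (L - k) := by
    rw [← pow_add]; congr 1; omega
  rw [div_pow, div_pow, h2]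
  field_simp
  linear_combination ((x - 1) ^ k * (x + 1) ^ (L - k)) * hc'

/-- The normalized summand as a rational function of `j = J/α` and `e = 1/α`. -/
noncomputable def Gterm (L n : ℕ) (j e : ℝ) : ℝ :=
  (-1 : ℝ) ^ (L + n) * (L.choose n : ℝ) ^ 2 *
    (2 * (∏ i ∈ Finset.range n, (2 + j + (2 + (i : ℝ)) * e)) *
        (∏ i ∈ Finset.range n, (2 - j + (1 + (i : ℝ) - n) * e)) *
        (∏ i ∈ Finset.range (L - n), (j + ((n : ℝ) + 1 + i - L) * e)) ^ 2 /
      ∏ i ∈ Finset.range (2 * L + 1), (2 + (1 + (i : ℝ) - L) * e))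

/-- The key algebraic identity relating the factorial quotient to `Gterm`'s body. -/
lemma key_identity (L n α Jv : ℕ) (hn : n ≤ L) (hα : 1 ≤ α) (hLJ : L ≤ Jv)
    (hJL : Jv + L ≤ 2 * α) :
    2 * (α : ℝ) *
      (((Nat.factorial (2 * α - L) : ℝ) * (Nat.factorial (2 * α + Jv + n + 1) : ℝ) *
          (Nat.factorial (2 * α - Jv) : ℝ) * (Nat.factorial Jv : ℝ) ^ 2) /
        ((Nat.factorial (2 * α + L + 1) : ℝ) * (Nat.factorial (2 * α + Jv + 1) : ℝ) *
          (Nat.factorial (2 * α - Jv - n) : ℝ) * (Nat.factorial (Jv + n - L) : ℝ) ^ 2))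
    = 2 * (∏ i ∈ Finset.range n, (2 + (Jv : ℝ) / α + (2 + (i : ℝ)) * (1 / α))) *
        (∏ i ∈ Finset.range n, (2 - (Jv : ℝ) / α + (1 + (i : ℝ) - n) * (1 / α))) *
        (∏ i ∈ Finset.range (L - n), ((Jv : ℝ) / α + ((n : ℝ) + 1 + i - L) * (1 / α))) ^ 2 /
      ∏ i ∈ Finset.range (2 * L + 1), (2 + (1 + (i : ℝ) - L) * (1 / α)) := by
  have hα0 : ((α : ℝ)) ≠ 0 := Nat.cast_ne_zero.mpr (by omega)
  have hL2α : L ≤ 2 * α := by omega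
  have hJn2α : Jv + n ≤ 2 * α := by omega
  have hLJn : L ≤ Jv + n := by omega
  have e1 : Nat.factorial (2*α + L + 1)
      = Nat.factorial (2*α - L) * ∏ i ∈ range (2*L+1), (2*α - L + 1 + i) := by
    have h := fact_add_eq (2*α - L) (2*L+1)
    rwa [show 2*α - L + (2*L+1) = 2*α + L + 1 by omega] at h
  have e2 : Nat.factorial (2*α + Jv + n + 1)
      = Nat.factorial (2*α + Jv + 1) * ∏ i ∈ range n, (2*α + Jv + 1 + 1 + i) := by
    have h := fact_add_eq (2*α + Jv + 1) n
    rwa [show 2*α + Jv + 1 + n = 2*α + Jv + n + 1 by omega] at h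
  have e3 : Nat.factorial (2*α - Jv)
      = Nat.factorial (2*α - Jv - n) * ∏ i ∈ range n, (2*α - Jv - n + 1 + i) := by
    have h := fact_add_eq (2*α - Jv - n) n
    rwa [show 2*α - Jv - n + n = 2*α - Jv by omega] at h
  have e4 : Nat.factorial Jv
      = Nat.factorial (Jv + n - L) * ∏ i ∈ range (L - n), (Jv + n - L + 1 + i) := by
    have h := fact_add_eq (Jv + n - L) (L - n)
    rwa [show Jv + n - L + (L - n) = Jv by omega] at h
  set A : ℝ := ∏ i ∈ range n, ((2*α + Jv + 1 + 1 + i : ℕ) : ℝ) with hA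
  set B : ℝ := ∏ i ∈ range n, ((2*α - Jv - n + 1 + i : ℕ) : ℝ) with hB
  set Cc : ℝ := ∏ i ∈ range (L - n), ((Jv + n - L + 1 + i : ℕ) : ℝ) with hCc
  set D : ℝ := ∏ i ∈ range (2*L+1), ((2*α - L + 1 + i : ℕ) : ℝ) with hD
  have f1 : (Nat.factorial (2*α + L + 1) : ℝ) = (Nat.factorial (2*α - L) : ℝ) * D := by
    rw [e1, Nat.cast_mul, Nat.cast_prod, ← hD]
  have f2 : (Nat.factorial (2*α + Jv + n + 1) : ℝ)
      = (Nat.factorial (2*α + Jv + 1) : ℝ) * A := by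
    rw [e2, Nat.cast_mul, Nat.cast_prod, ← hA]
  have f3 : (Nat.factorial (2*α - Jv) : ℝ) = (Nat.factorial (2*α - Jv - n) : ℝ) * B := by
    rw [e3, Nat.cast_mul, Nat.cast_prod, ← hB]
  have f4 : (Nat.factorial Jv : ℝ) = (Nat.factorial (Jv + n - L) : ℝ) * Cc := by
    rw [e4, Nat.cast_mul, Nat.cast_prod, ← hCc]
  have hP1 : ∏ i ∈ Finset.range n, (2 + (Jv : ℝ) / α + (2 + (i : ℝ)) * (1 / α))
      = A / (α : ℝ) ^ n := by
    have hf : ∀ i ∈ range n, (2 + (Jv : ℝ) / α + (2 + (i : ℝ)) * (1 / α))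
        = ((2*α + Jv + 1 + 1 + i : ℕ) : ℝ) / α := by
      intro i _
      push_cast
      field_simp
      ring
    rw [Finset.prod_congr rfl hf, Finset.prod_div_distrib, Finset.prod_const,
      Finset.card_range, ← hA]
  have hP2 : ∏ i ∈ Finset.range n, (2 - (Jv : ℝ) / α + (1 + (i : ℝ) - n) * (1 / α))
      = B / (α : ℝ) ^ n := by
    have hf : ∀ i ∈ range n, (2 - (Jv : ℝ) / α + (1 + (i : ℝ) - n) * (1 / α))
        = ((2*α - Jv - n + 1 + i : ℕ) : ℝ) / α := by
      intro i _
      rw [show 2*α - Jv - n + 1 + i = 2*α - (Jv + n) + 1 + i by omega]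
      push_cast [Nat.cast_sub hJn2α]
      field_simp
      ring
    rw [Finset.prod_congr rfl hf, Finset.prod_div_distrib, Finset.prod_const,
      Finset.card_range, ← hB]
  have hP3 : ∏ i ∈ Finset.range (L - n), ((Jv : ℝ) / α + ((n : ℝ) + 1 + i - L) * (1 / α))
      = Cc / (α : ℝ) ^ (L - n) := by
    have hf : ∀ i ∈ range (L - n), ((Jv : ℝ) / α + ((n : ℝ) + 1 + i - L) * (1 / α))
        = ((Jv + n - L + 1 + i : ℕ) : ℝ) / α := by
      intro i _
      push_cast [Nat.cast_sub hLJn]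
      field_simp
      ring
    rw [Finset.prod_congr rfl hf, Finset.prod_div_distrib, Finset.prod_const,
      Finset.card_range, ← hCc]
  have hPD : ∏ i ∈ Finset.range (2 * L + 1), (2 + (1 + (i : ℝ) - L) * (1 / α))
      = D / (α : ℝ) ^ (2*L+1) := by
    have hf : ∀ i ∈ range (2*L+1), (2 + (1 + (i : ℝ) - L) * (1 / α))
        = ((2*α - L + 1 + i : ℕ) : ℝ) / α := by
      intro i _
      push_cast [Nat.cast_sub hL2α]
      field_simp
      ring
    rw [Finset.prod_congr rfl hf, Finset.prod_div_distrib, Finset.prod_const,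
      Finset.card_range, ← hD]
  have hDne : D ≠ 0 := by
    rw [hD]
    exact ne_of_gt (Finset.prod_pos fun i _ => by
      exact_mod_cast Nat.succ_le_iff.mp (by omega : 1 ≤ 2*α - L + 1 + i))
  have hF : ∀ m : ℕ, (Nat.factorial m : ℝ) ≠ 0 :=
    fun m => Nat.cast_ne_zero.mpr m.factorial_ne_zero
  rw [f1, f2, f3, f4, hP1, hP2, hP3, hPD]
  have hpow : ((α : ℝ)) ^ (2*L+1) = (α:ℝ)^n * (α:ℝ)^n * ((α:ℝ)^(L-n))^2 * α := by
    rw [show 2*L+1 = n + n + (L-n)*2 + 1 by omega, pow_add, pow_add, pow_add,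
      pow_mul, pow_one]
  rw [hpow]
  field_simp

/-- The Racah 6j-symbol `{α α L; α α J}` via Racah's single-sum formula.
Here `(−1)^{2α} = 1` since `α` is an integer, and the sum runs over
`n` with `max(0, L−J) ≤ n ≤ min(L, 2α−J)` (truncated ℕ-subtraction realizes
`max(0, L−J)` as `L − J`, and `J + n − L` realizes `J − L + n ≥ 0`). -/
noncomputable def SixJ (α L J : ℕ) : ℝ :=
  (-1 : ℝ) ^ J *
    ∑ n ∈ Finset.Icc (L - J) (min L (2 * α - J)),
      (-1 : ℝ) ^ n * (Nat.choose L n : ℝ) ^ 2 *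
        (((Nat.factorial (2 * α - L) : ℝ) * (Nat.factorial (2 * α + J + n + 1) : ℝ) *
            (Nat.factorial (2 * α - J) : ℝ) * (Nat.factorial J : ℝ) ^ 2) /
          ((Nat.factorial (2 * α + L + 1) : ℝ) * (Nat.factorial (2 * α + J + 1) : ℝ) *
            (Nat.factorial (2 * α - J - n) : ℝ) * (Nat.factorial (J + n - L) : ℝ) ^ 2))

/-- Racah's asymptotic formula: for fixed `L` and `0 < u < 2`, as the positive
integer `α → ∞`, `(−1)^{L+⌊uα⌋} · 2α · SixJ(α, L, ⌊uα⌋)` converges to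
`P_L(1 − u²/2)`. -/
theorem racah_sixj_asymptotics (L : ℕ) (u : ℝ) (hu0 : 0 < u) (hu2 : u < 2) :
    Tendsto (fun α : ℕ =>
        (-1 : ℝ) ^ (L + ⌊u * (α : ℝ)⌋₊) * (2 * (α : ℝ)) * SixJ α L ⌊u * (α : ℝ)⌋₊)
      atTop (nhds (legendreP L (1 - u ^ 2 / 2))) := by
  set Jf : ℕ → ℕ := fun α => ⌊u * (α : ℝ)⌋₊ with hJf
  have hj : Tendsto (fun α : ℕ => (Jf α : ℝ) / α) atTop (nhds u) :=
    (tendsto_nat_floor_mul_div_atTop hu0.le).comp tendsto_natCast_atTop_atTop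
  have he : Tendsto (fun α : ℕ => 1 / (α : ℝ)) atTop (nhds 0) :=
    tendsto_one_div_atTop_nhds_zero_nat
  have hev1 : ∀ᶠ α : ℕ in atTop, 1 ≤ α := eventually_ge_atTop 1
  have hev2 : ∀ᶠ α : ℕ in atTop, L ≤ Jf α :=
    (tendsto_nat_floor_mul_atTop u hu0).eventually_ge_atTop L
  have hev3 : ∀ᶠ α : ℕ in atTop, Jf α + L ≤ 2 * α := by
    have h2u : Tendsto (fun α : ℕ => (2 - u) * (α : ℝ)) atTop atTop :=
      tendsto_natCast_atTop_atTop.const_mul_atTop (by linarith)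
    filter_upwards [h2u.eventually_ge_atTop (L : ℝ)] with α hα
    have hfl : (Jf α : ℝ) ≤ u * α := Nat.floor_le (by positivity)
    have : (Jf α : ℝ) + L ≤ 2 * α := by linarith
    exact_mod_cast this
  have hEq : ∀ᶠ α : ℕ in atTop,
      (-1 : ℝ) ^ (L + Jf α) * (2 * (α : ℝ)) * SixJ α L (Jf α)
        = ∑ n ∈ Finset.range (L + 1), Gterm L n ((Jf α : ℝ) / α) (1 / (α : ℝ)) := by
    filter_upwards [hev1, hev2, hev3] with α h1 h2 h3
    have hset : Finset.Icc (L - Jf α) (min L (2 * α - Jf α)) = Finset.range (L + 1) := by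
      rw [Nat.sub_eq_zero_of_le h2, min_eq_left (by omega)]
      ext m; simp [Nat.lt_succ_iff]
    rw [SixJ, hset]
    simp only [Finset.mul_sum]
    refine Finset.sum_congr rfl fun n hn => ?_
    have hnL : n ≤ L := Nat.lt_succ_iff.mp (Finset.mem_range.mp hn)
    have hk := key_identity L n α (Jf α) hnL h1 h2 h3
    have hsign : ∀ x y : ℝ,
        (-1 : ℝ) ^ (L + Jf α) * (2 * (α : ℝ)) * ((-1) ^ (Jf α) * ((-1) ^ n * x * y))
          = (-1 : ℝ) ^ (L + n) * x * (2 * (α : ℝ) * y) := by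
      intro x y
      have hJJ : ((-1 : ℝ)) ^ (Jf α) * (-1) ^ (Jf α) = 1 := by
        rw [← pow_add, ← two_mul, pow_mul]; norm_num
      rw [pow_add, pow_add]
      linear_combination ((-1 : ℝ) ^ L * (-1) ^ n * (2 * (α : ℝ)) * x * y) * hJJ
    rw [hsign, hk, Gterm]
  rw [show legendreP L (1 - u ^ 2 / 2) = ∑ n ∈ Finset.range (L + 1), Gterm L n u 0 from ?_]
  · refine Tendsto.congr' (hEq.mono fun α h => h.symm) ?_
    refine tendsto_finset_sum _ fun n hn => ?_
    simp only [Gterm]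
    refine tendsto_const_nhds.mul (Tendsto.div ?_ ?_ ?_)
    · refine Tendsto.mul (Tendsto.mul (tendsto_const_nhds.mul ?_) ?_) (Tendsto.pow ?_ 2)
      · exact tendsto_finset_prod _ fun i _ =>
          (tendsto_const_nhds.add hj).add (tendsto_const_nhds.mul he)
      · exact tendsto_finset_prod _ fun i _ =>
          (tendsto_const_nhds.sub hj).add (tendsto_const_nhds.mul he)
      · exact tendsto_finset_prod _ fun i _ => hj.add (tendsto_const_nhds.mul he)
    · exact tendsto_finset_prod _ fun i _ =>
        tendsto_const_nhds.add (tendsto_const_nhds.mul he)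
    · have : ∏ i ∈ Finset.range (2 * L + 1), (2 + (1 + (i : ℝ) - L) * (0 : ℝ))
          = 2 ^ (2 * L + 1) := by simp
      rw [this]; positivity
  · rw [legendreP_eq_sum, ← Finset.sum_range_reflect]
    refine Finset.sum_congr rfl fun n hn => ?_
    have hnL : n ≤ L := Nat.lt_succ_iff.mp (Finset.mem_range.mp hn)
    rw [show L + 1 - 1 - n = L - n by omega, Nat.choose_symm hnL,
      show L - (L - n) = n by omega]
    simp only [Gterm, mul_zero, add_zero, Finset.prod_const, Finset.card_range]
    rw [show (1 - u ^ 2 / 2 - 1) / 2 = (-1) * (u ^ 2 / 4) by ring,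
      show (1 - u ^ 2 / 2 + 1) / 2 = ((2 + u) * (2 - u)) / 4 by ring,
      mul_pow ((-1 : ℝ)) (u ^ 2 / 4), div_pow (u ^ 2) 4 (L - n),
      div_pow ((2 + u) * (2 - u)) 4 n, mul_pow (2 + u) (2 - u) n,
      show L + n = (L - n) + 2 * n by omega, pow_add ((-1:ℝ)) (L - n) (2*n),
      pow_mul, neg_one_sq, one_pow, mul_one,
      show (2 : ℝ) ^ (2 * L + 1) = 2 * 4 ^ (L - n) * 4 ^ n by
        rw [show (4 : ℝ) = 2 ^ 2 by norm_num, ← pow_mul, ← pow_mul,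
          show 2 * L + 1 = ((L - n) * 2 + n * 2) + 1 by omega, pow_succ, pow_add]
        ring,
      show ((u : ℝ) ^ (L - n)) ^ 2 = (u ^ 2) ^ (L - n) by rw [← pow_mul, ← pow_mul, mul_comm]]
    have h4m : ((4 : ℝ)) ^ (L - n) ≠ 0 := by positivity
    have h4n : ((4 : ℝ)) ^ n ≠ 0 := by positivity
    field_simp
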